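/- Let Q be a quiver with vertex set Q₀ and arrow set Q₁, and let N be a positive integer. If Q has no oriented cycles (i.e. there is no path of positive length in Q from a vertex to itself), then the twisted quiver Q(Q′) also has no oriented cycles. -/

import Mathlib

universe u v

/-- The arrows of the twisted quiver `Q(Q′)`: vertices are `v_{ik}` (encoded `Sum.inl (i,k)`)
and `w_{ik}` (encoded `Sum.inr (i,k)`) for `i` a vertex of `Q` and `k ∈ {1,…,N}`.
Arrows are `φ_{ikl} : v_{ik} → w_{il}` for all `i, k, l`, and for every arrow `α : i → j` of `Q`
and every `k`, arrows `α_k^left : v_{ik} → v_{jk}` and `α_k^right : w_{ik} → w_{jk}`. -/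
inductive TwistedHom (Q₀ : Type u) [Quiver.{v} Q₀] (N : ℕ) :
    (Q₀ × Fin N) ⊕ (Q₀ × Fin N) → (Q₀ × Fin N) ⊕ (Q₀ × Fin N) → Type (max u v)
  | phi (i : Q₀) (k l : Fin N) : TwistedHom Q₀ N (Sum.inl (i, k)) (Sum.inr (i, l))
  | left {i j : Q₀} (α : i ⟶ j) (k : Fin N) :
      TwistedHom Q₀ N (Sum.inl (i, k)) (Sum.inl (j, k))
  | right {i j : Q₀} (α : i ⟶ j) (k : Fin N) :
      TwistedHom Q₀ N (Sum.inr (i, k)) (Sum.inr (j, k))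

/-- The twisted quiver `Q(Q′)` as a quiver structure on the disjoint union of the
`v`-vertices and the `w`-vertices. -/
def twistedQuiver (Q₀ : Type u) [Quiver.{v} Q₀] (N : ℕ) :
    Quiver ((Q₀ × Fin N) ⊕ (Q₀ × Fin N)) :=
  ⟨TwistedHom Q₀ N⟩

section Aux
attribute [local instance] twistedQuiver
variable (Q₀ : Type u) [Quiver.{v} Q₀] (N : ℕ)

def tproj : (Q₀ × Fin N) ⊕ (Q₀ × Fin N) → Q₀
  | Sum.inl (i, _) => i
  | Sum.inr (i, _) => i

def tside : (Q₀ × Fin N) ⊕ (Q₀ × Fin N) → ℕ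
  | Sum.inl _ => 0
  | Sum.inr _ => 1

theorem tkey : ∀ {x y : (Q₀ × Fin N) ⊕ (Q₀ × Fin N)} (p : Quiver.Path x y),
    ∃ q : Quiver.Path (tproj Q₀ N x) (tproj Q₀ N y),
      p.length + tside Q₀ N x = q.length + tside Q₀ N y := by
  intro x y p
  induction p with
  | nil => exact ⟨Quiver.Path.nil, rfl⟩
  | cons p e ih =>
    have hl : (p.cons e).length = p.length + 1 := Quiver.Path.length_cons _ _ _ p e
    change TwistedHom Q₀ N _ _ at e
    cases e with
    | phi i k l =>
      obtain ⟨q, hq⟩ := ih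
      exact ⟨q, by simp only [Quiver.Path.length_cons, tside] at *; rw [hl]; change _ = q.length + 1; omega⟩
    | left α k =>
      obtain ⟨q, hq⟩ := ih
      exact ⟨q.cons α, by simp only [Quiver.Path.length_cons, tside] at *; rw [hl]; change _ = q.length + 1 + 0; omega⟩
    | right α k =>
      obtain ⟨q, hq⟩ := ih
      exact ⟨q.cons α, by simp only [Quiver.Path.length_cons, tside] at *; rw [hl]; change _ = q.length + 1 + 1; omega⟩

end Aux

/-- If the quiver `Q` has no oriented cycles (no path of positive length from a vertex to
itself), then the twisted quiver `Q(Q′)` has no oriented cycles either. -/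
theorem twistedQuiver_no_oriented_cycles (Q₀ : Type u) [Quiver.{v} Q₀] (N : ℕ) (hN : 0 < N)
    (hQ : ∀ (i : Q₀) (p : Quiver.Path i i), p.length = 0) :
    ∀ (x : (Q₀ × Fin N) ⊕ (Q₀ × Fin N))
      (p : @Quiver.Path _ (twistedQuiver Q₀ N) x x),
      @Quiver.Path.length _ (twistedQuiver Q₀ N) x x p = 0 := by
  intro x p
  obtain ⟨q, hq⟩ := tkey Q₀ N p
  have hp := hQ (tproj Q₀ N x) q
  omega
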